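/- Let P₁(q) = 3q² − 2q³ and let π be any probability measure on [0,1] with mean μ = ∫ q dπ. Then ∫ P₁(q) dπ(q) ≥ L₁^one(μ) and ∫ P₁(q) dπ(q) ≤ U₁^one(μ), where L₁^one(μ) = P₁(μ) for μ ≤ 1/4 and L₁^one(μ) = (9μ−1)/8 for μ ≥ 1/4, and U₁^one(μ) = 9μ/8 for μ ≤ 3/4 and U₁^one(μ) = P₁(μ) for μ ≥ 3/4. Both bounds are sharp: the linear lower branch is attained by laws supported on {1/4, 1} and the linear upper branch by laws supported on {0, 3/4}. In particular L₁^one(μ) ≤ μ for every μ ∈ (0,1). -/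

import Mathlib

open MeasureTheory

/-- The three-vote strict-majority success probability: `P₁(q) = 3q² − 2q³`. -/
def P1 (q : ℝ) : ℝ := 3 * q ^ 2 - 2 * q ^ 3

/-- The lower convex envelope of `P₁` on `[0,1]` (mean-only lower bound). -/
noncomputable def LoneEnv (μ : ℝ) : ℝ := if μ ≤ 1 / 4 then P1 μ else (9 * μ - 1) / 8

/-- The upper concave envelope of `P₁` on `[0,1]` (mean-only upper bound). -/
noncomputable def UoneEnv (μ : ℝ) : ℝ := if μ ≤ 3 / 4 then 9 * μ / 8 else P1 μ

lemma P1_cont : Continuous P1 := by unfold P1; continuity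

lemma P1_meas : Measurable P1 := P1_cont.measurable

lemma ae_mem (π : Measure ℝ) (h0 : π ((Set.Icc (0 : ℝ) 1)ᶜ) = 0) :
    ∀ᵐ q ∂π, q ∈ Set.Icc (0:ℝ) 1 := by
  rw [ae_iff]
  simpa [Set.compl_def] using h0

lemma int_id (π : Measure ℝ) [IsProbabilityMeasure π]
    (h0 : π ((Set.Icc (0 : ℝ) 1)ᶜ) = 0) : Integrable (fun q : ℝ => q) π := by
  refine (integrable_const (1:ℝ)).mono' measurable_id.aestronglyMeasurable ?_
  filter_upwards [ae_mem π h0] with q hq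
  rw [Real.norm_eq_abs]
  exact abs_le.mpr ⟨by linarith [hq.1], hq.2⟩

lemma int_P1 (π : Measure ℝ) [IsProbabilityMeasure π]
    (h0 : π ((Set.Icc (0 : ℝ) 1)ᶜ) = 0) : Integrable (fun q : ℝ => P1 q) π := by
  refine (integrable_const (5:ℝ)).mono' P1_cont.aestronglyMeasurable ?_
  filter_upwards [ae_mem π h0] with q hq
  rw [Real.norm_eq_abs]
  obtain ⟨h1, h2⟩ := hq
  unfold P1
  rw [abs_le]
  constructor <;> nlinarith

lemma line_le (π : Measure ℝ) [IsProbabilityMeasure π]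
    (h0 : π ((Set.Icc (0 : ℝ) 1)ᶜ) = 0) (a b : ℝ)
    (h : ∀ q ∈ Set.Icc (0:ℝ) 1, a + b * q ≤ P1 q) :
    a + b * (∫ q, q ∂π) ≤ ∫ q, P1 q ∂π := by
  have hi : Integrable (fun q : ℝ => a + b * q) π :=
    (integrable_const a).add ((int_id π h0).const_mul b)
  have := integral_mono_ae hi (int_P1 π h0) (by
    filter_upwards [ae_mem π h0] with q hq using h q hq)
  rwa [integral_add (integrable_const a) ((int_id π h0).const_mul b),
    integral_const, integral_const_mul, probReal_univ, one_smul] at this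

lemma le_line (π : Measure ℝ) [IsProbabilityMeasure π]
    (h0 : π ((Set.Icc (0 : ℝ) 1)ᶜ) = 0) (a b : ℝ)
    (h : ∀ q ∈ Set.Icc (0:ℝ) 1, P1 q ≤ a + b * q) :
    (∫ q, P1 q ∂π) ≤ a + b * (∫ q, q ∂π) := by
  have hi : Integrable (fun q : ℝ => a + b * q) π :=
    (integrable_const a).add ((int_id π h0).const_mul b)
  have := integral_mono_ae (int_P1 π h0) hi (by
    filter_upwards [ae_mem π h0] with q hq using h q hq)
  rwa [integral_add (integrable_const a) ((int_id π h0).const_mul b),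
    integral_const, integral_const_mul, probReal_univ, one_smul] at this

lemma integrable_dirac'' {f : ℝ → ℝ} (hf : Measurable f) (a : ℝ) :
    Integrable f (Measure.dirac a) :=
  ⟨hf.aestronglyMeasurable, by
    rw [HasFiniteIntegral, lintegral_dirac]; exact ENNReal.coe_lt_top⟩

lemma mix_integral (x y t : ℝ) (ht0 : 0 ≤ t) (ht1 : t ≤ 1) {f : ℝ → ℝ} (hf : Measurable f) :
    (∫ q, f q ∂(ENNReal.ofReal (1 - t) • Measure.dirac x + ENNReal.ofReal t • Measure.dirac y))
      = (1 - t) * f x + t * f y := by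
  rw [integral_add_measure ((integrable_dirac'' hf x).smul_measure ENNReal.ofReal_ne_top)
      ((integrable_dirac'' hf y).smul_measure ENNReal.ofReal_ne_top),
    integral_smul_measure, integral_smul_measure, integral_dirac, integral_dirac,
    ENNReal.toReal_ofReal (by linarith), ENNReal.toReal_ofReal ht0, smul_eq_mul, smul_eq_mul]

lemma mix_prob (x y t : ℝ) (ht0 : 0 ≤ t) (ht1 : t ≤ 1) :
    IsProbabilityMeasure
      (ENNReal.ofReal (1 - t) • Measure.dirac x + ENNReal.ofReal t • Measure.dirac y) := by
  constructor
  rw [Measure.add_apply, Measure.smul_apply, Measure.smul_apply, measure_univ, measure_univ,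
    smul_eq_mul, smul_eq_mul, mul_one, mul_one, ← ENNReal.ofReal_add (by linarith) ht0]
  norm_num

lemma mix_null (x y t : ℝ) {s : Set ℝ} (hs : MeasurableSet s) (hx : x ∈ s) (hy : y ∈ s) :
    (ENNReal.ofReal (1 - t) • Measure.dirac x + ENNReal.ofReal t • Measure.dirac y) sᶜ = 0 := by
  rw [Measure.add_apply, Measure.smul_apply, Measure.smul_apply,
    Measure.dirac_apply' x hs.compl, Measure.dirac_apply' y hs.compl,
    Set.indicator_of_notMem (by simpa using hx), Set.indicator_of_notMem (by simpa using hy)]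
  simp

/-- **Mean-only three-vote envelope.** For every probability measure `π` on `[0,1]` with
mean `μ`, `L₁^one(μ) ≤ ∫ P₁ dπ ≤ U₁^one(μ)`.  Both bounds are sharp: the linear lower
branch is attained by laws supported on `{1/4, 1}`, and the linear upper branch by laws
supported on `{0, 3/4}`.  In particular `L₁^one(μ) ≤ μ` for every `μ ∈ (0,1)`. -/
theorem mean_only_envelope :
    (∀ (μ : ℝ) (π : Measure ℝ), IsProbabilityMeasure π →
      π ((Set.Icc (0 : ℝ) 1)ᶜ) = 0 → (∫ q, q ∂π) = μ →
      LoneEnv μ ≤ (∫ q, P1 q ∂π) ∧ (∫ q, P1 q ∂π) ≤ UoneEnv μ) ∧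
    (∀ μ : ℝ, 1 / 4 ≤ μ → μ ≤ 1 →
      ∃ π : Measure ℝ, IsProbabilityMeasure π ∧ π (({1 / 4, 1} : Set ℝ)ᶜ) = 0 ∧
        (∫ q, q ∂π) = μ ∧ (∫ q, P1 q ∂π) = (9 * μ - 1) / 8) ∧
    (∀ μ : ℝ, 0 ≤ μ → μ ≤ 3 / 4 →
      ∃ π : Measure ℝ, IsProbabilityMeasure π ∧ π (({0, 3 / 4} : Set ℝ)ᶜ) = 0 ∧
        (∫ q, q ∂π) = μ ∧ (∫ q, P1 q ∂π) = 9 * μ / 8) ∧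
    (∀ μ : ℝ, 0 < μ → μ < 1 → LoneEnv μ ≤ μ) := by
  refine ⟨?_, ?_, ?_, ?_⟩
  · intro μ π hprob h0 hmean
    haveI := hprob
    constructor
    · unfold LoneEnv
      split_ifs with h
      · have key := line_le π h0 (P1 μ - 6 * μ * (1 - μ) * μ) (6 * μ * (1 - μ)) ?_
        · rw [hmean] at key
          have : P1 μ - 6 * μ * (1 - μ) * μ + 6 * μ * (1 - μ) * μ = P1 μ := by ring
          linarith
        · intro q hq
          obtain ⟨h1, h2⟩ := hq
          unfold P1
          nlinarith [mul_nonneg (sq_nonneg (q - μ)) (show (0:ℝ) ≤ 3/2 - 2*μ - q by linarith)]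
      · have key := line_le π h0 (-(1/8)) (9/8) ?_
        · rw [hmean] at key
          linarith
        · intro q hq
          obtain ⟨h1, h2⟩ := hq
          unfold P1
          nlinarith [mul_nonneg (sq_nonneg (q - 1/4)) (show (0:ℝ) ≤ 1 - q by linarith)]
    · unfold UoneEnv
      split_ifs with h
      · have key := le_line π h0 0 (9/8) ?_
        · rw [hmean] at key
          linarith
        · intro q hq
          obtain ⟨h1, h2⟩ := hq
          unfold P1
          nlinarith [mul_nonneg h1 (sq_nonneg (4*q - 3))]
      · push_neg at h
        have key := le_line π h0 (P1 μ - 6 * μ * (1 - μ) * μ) (6 * μ * (1 - μ)) ?_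
        · rw [hmean] at key
          have : P1 μ - 6 * μ * (1 - μ) * μ + 6 * μ * (1 - μ) * μ = P1 μ := by ring
          linarith
        · intro q hq
          obtain ⟨h1, h2⟩ := hq
          unfold P1
          nlinarith [mul_nonneg (sq_nonneg (q - μ)) (show (0:ℝ) ≤ q + 2*μ - 3/2 by linarith)]
  · intro μ h1 h2
    set t : ℝ := (4 * μ - 1) / 3 with ht
    have ht0 : 0 ≤ t := by rw [ht]; linarith
    have ht1 : t ≤ 1 := by rw [ht]; linarith
    refine ⟨ENNReal.ofReal (1 - t) • Measure.dirac (1/4) + ENNReal.ofReal t • Measure.dirac 1,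
      mix_prob _ _ _ ht0 ht1, mix_null _ _ _ ?_ ?_ ?_, ?_, ?_⟩
    · exact (measurableSet_singleton (1:ℝ)).insert (1/4)
    · exact Set.mem_insert _ _
    · exact Set.mem_insert_of_mem _ rfl
    · rw [mix_integral _ _ _ ht0 ht1 (f := fun q => q) measurable_id, ht]; ring
    · rw [mix_integral _ _ _ ht0 ht1 P1_meas, ht]; unfold P1; ring
  · intro μ h1 h2
    set t : ℝ := 4 * μ / 3 with ht
    have ht0 : 0 ≤ t := by rw [ht]; linarith
    have ht1 : t ≤ 1 := by rw [ht]; linarith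
    refine ⟨ENNReal.ofReal (1 - t) • Measure.dirac 0 + ENNReal.ofReal t • Measure.dirac (3/4),
      mix_prob _ _ _ ht0 ht1, mix_null _ _ _ ?_ ?_ ?_, ?_, ?_⟩
    · exact (measurableSet_singleton ((3:ℝ)/4)).insert 0
    · exact Set.mem_insert _ _
    · exact Set.mem_insert_of_mem _ rfl
    · rw [mix_integral _ _ _ ht0 ht1 (f := fun q => q) measurable_id, ht]; ring
    · rw [mix_integral _ _ _ ht0 ht1 P1_meas, ht]; unfold P1; ring
  · intro μ h0 h1
    unfold LoneEnv
    split_ifs with h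
    · unfold P1
      nlinarith
    · linarith
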